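/- If the channel W is additive on a finite abelian group X, i.e., W_x(z) = P(z − x) for a fixed probability distribution P on X, then for the uniform input distribution p_mix one has e^{ψ(s|W,p_mix)} = |X|^s · e^{−H̃_{1+s}(P)} and e^{φ(t|W,p_mix)} = |X|^t · e^{−(1−t)·H̃_{1+t/(1−t)}(P)}, where H̃_{1+u}(P) = −log ∑_z P(z)^{1+u}. -/

import Mathlib

open Real Finset

/-- Equation (12-26-2): for an additive channel `W_x(z) = P(z − x)` on a finite
abelian group `X` and the uniform input `p_mix`,
`e^{ψ(s|W,p_mix)} = |X|^s · e^{−H̃_{1+s}(P)}` and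
`e^{φ(t|W,p_mix)} = |X|^t · e^{−(1−t)·H̃_{1+t/(1−t)}(P)}`, where
`e^{−H̃_{1+u}(P)} = ∑_z P(z)^{1+u}`. -/
theorem additive_channel_psi_phi {X : Type*} [Fintype X] [AddCommGroup X]
    (P : X → ℝ) (hP : ∀ z, 0 ≤ P z) (hP1 : ∑ z, P z = 1)
    (s t : ℝ) (hs0 : 0 ≤ s) (hs1 : s ≤ 1) (ht0 : 0 ≤ t) (ht1 : t < 1) :
    (∑ z, (∑ x, (Fintype.card X : ℝ)⁻¹ * P (z - x) ^ (1 + s)) *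
        (∑ x, (Fintype.card X : ℝ)⁻¹ * P (z - x)) ^ (-s)
      = (Fintype.card X : ℝ) ^ s * (∑ z, P z ^ (1 + s)))
    ∧ (∑ z, (∑ x, (Fintype.card X : ℝ)⁻¹ * P (z - x) ^ (1 / (1 - t))) ^ (1 - t)
      = (Fintype.card X : ℝ) ^ t * (∑ z, P z ^ (1 + t / (1 - t))) ^ (1 - t)) := by
  have hXne : Nonempty X := ⟨0⟩
  set c : ℝ := (Fintype.card X : ℝ) with hc
  have hcpos : 0 < c := by
    rw [hc]; exact_mod_cast Fintype.card_pos (α := X)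
  have hcne : c ≠ 0 := ne_of_gt hcpos
  have key : ∀ (a : ℝ) (z : X), ∑ x, P (z - x) ^ a = ∑ w, P w ^ a := by
    intro a z
    exact Fintype.sum_equiv (Equiv.subLeft z) _ _ (fun x => rfl)
  have key1 : ∀ z : X, ∑ x, P (z - x) = 1 := by
    intro z
    rw [show (∑ x, P (z - x)) = ∑ w, P w from
      Fintype.sum_equiv (Equiv.subLeft z) _ _ (fun x => rfl), hP1]
  have hS : 0 ≤ ∑ w, P w ^ (1 + s) :=
    Finset.sum_nonneg fun w _ => rpow_nonneg (hP w) _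
  have hT : 0 ≤ ∑ w, P w ^ (1 / (1 - t)) :=
    Finset.sum_nonneg fun w _ => rpow_nonneg (hP w) _
  constructor
  · have : ∀ z : X, (∑ x, c⁻¹ * P (z - x) ^ (1 + s)) *
        (∑ x, c⁻¹ * P (z - x)) ^ (-s)
        = c⁻¹ * (∑ w, P w ^ (1 + s)) * (c⁻¹) ^ (-s) := by
      intro z
      rw [← Finset.mul_sum, key, ← Finset.mul_sum, key1, mul_one]
    rw [Finset.sum_congr rfl fun z _ => this z, Finset.sum_const,
      Finset.card_univ, nsmul_eq_mul]
    have h1 : (c⁻¹) ^ (-s) = c ^ s := by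
      rw [Real.inv_rpow (le_of_lt hcpos), ← Real.rpow_neg (le_of_lt hcpos),
        neg_neg]
    rw [show ((Fintype.card X : ℕ) : ℝ) = c from rfl, h1, ← mul_assoc,
      ← mul_assoc, mul_inv_cancel₀ hcne, one_mul, mul_comm]
  · have : ∀ z : X, (∑ x, c⁻¹ * P (z - x) ^ (1 / (1 - t))) ^ (1 - t)
        = (c⁻¹) ^ (1 - t) * (∑ w, P w ^ (1 / (1 - t))) ^ (1 - t) := by
      intro z
      rw [← Finset.mul_sum, key,
        Real.mul_rpow (inv_nonneg.mpr (le_of_lt hcpos)) hT]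
    rw [Finset.sum_congr rfl fun z _ => this z, Finset.sum_const,
      Finset.card_univ, nsmul_eq_mul]
    have h1t : (1 : ℝ) - t ≠ 0 := by linarith
    have hexp : 1 + t / (1 - t) = 1 / (1 - t) := by
      field_simp
      ring
    rw [hexp]
    have h3 : c * (c⁻¹) ^ (1 - t) = c ^ t := by
      rw [Real.inv_rpow (le_of_lt hcpos), ← Real.rpow_neg (le_of_lt hcpos),
        show c * c ^ (-(1 - t)) = c ^ (1:ℝ) * c ^ (-(1 - t)) from by
          rw [Real.rpow_one],
        ← Real.rpow_add hcpos]
      norm_num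
    rw [show ((Fintype.card X : ℕ) : ℝ) = c from rfl, ← mul_assoc, h3]
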